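/- Let σ be a nonzero polynomial of total degree k whose zero set contains an n-independent finite set X ⊂ ℂ². Let Y ⊂ ℂ² be a finite set disjoint from the zero set of σ that is (n-k)-independent. Then X ∪ Y is n-independent. -/
import Mathlib


open MvPolynomial

abbrev Poly2 := MvPolynomial (Fin 2) ℂ
abbrev Pt := Fin 2 → ℂ

/-- `p` is an `n`-fundamental polynomial of the point `A` with respect to the set `S`. -/
def IsFund (n : ℕ) (S : Finset Pt) (A : Pt) (p : Poly2) : Prop :=
  p.totalDegree ≤ n ∧ (∀ x ∈ S, x ≠ A → eval x p = 0) ∧ eval A p ≠ 0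

/-- A finite point set is `n`-independent if each of its points has an
`n`-fundamental polynomial. -/
def NIndep (n : ℕ) (S : Finset Pt) : Prop := ∀ A ∈ S, ∃ p : Poly2, IsFund n S A p

/-- A finite point set is essentially `k`-dependent if no point has a
`k`-fundamental polynomial. -/
def EssDep (k : ℕ) (S : Finset Pt) : Prop :=
  ∀ A ∈ S, ∀ p : Poly2, p.totalDegree ≤ k →
    (∀ x ∈ S, x ≠ A → eval x p = 0) → eval A p = 0

theorem stmt5 (n k : ℕ) (hkn : k ≤ n) (σ : Poly2) (hσ : σ ≠ 0)
    (hdeg : σ.totalDegree = k) (X Y : Finset Pt)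
    (hXσ : ∀ x ∈ X, eval x σ = 0) (hXind : NIndep n X)
    (hYσ : ∀ y ∈ Y, eval y σ ≠ 0) (hYind : NIndep (n - k) Y) :
    NIndep n (X ∪ Y) := by
  -- choose fundamental polynomials for points of Y
  choose q hq using hYind
  intro A hA
  rcases Finset.mem_union.mp hA with hAX | hAY
  · -- A ∈ X
    obtain ⟨p, hpd, hpz, hpA⟩ := hXind A hAX
    -- correction term
    set s : Poly2 := ∑ y ∈ Y.attach,
      C (eval y.1 p / (eval y.1 σ * eval y.1 (q y.1 y.2))) * q y.1 y.2 with hs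
    refine ⟨p - σ * s, ?_, ?_, ?_⟩
    · -- degree bound
      have hsd : s.totalDegree ≤ n - k := by
        refine (totalDegree_finset_sum _ _).trans (Finset.sup_le fun y _ => ?_)
        calc (C (eval y.1 p / (eval y.1 σ * eval y.1 (q y.1 y.2))) * q y.1 y.2).totalDegree
            ≤ _ + _ := totalDegree_mul _ _
          _ ≤ 0 + (n - k) := add_le_add (le_of_eq (totalDegree_C _)) (hq y.1 y.2).1
          _ = n - k := zero_add _
      have : (σ * s).totalDegree ≤ n := by
        calc (σ * s).totalDegree ≤ σ.totalDegree + s.totalDegree := totalDegree_mul _ _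
          _ ≤ k + (n - k) := add_le_add (le_of_eq hdeg) hsd
          _ = n := Nat.add_sub_cancel' hkn
      calc (p - σ * s).totalDegree = (p + -(σ * s)).totalDegree := by ring_nf
        _ ≤ max p.totalDegree (-(σ * s)).totalDegree := totalDegree_add _ _
        _ ≤ n := by rw [totalDegree_neg]; exact max_le hpd this
    · -- vanishing
      intro x hx hxA
      rcases Finset.mem_union.mp hx with hxX | hxY
      · simp only [eval_sub, eval_mul, hXσ x hxX, zero_mul, sub_zero]
        exact hpz x hxX hxA
      · have : eval x s = eval x p / (eval x σ * eval x (q x hxY)) * eval x (q x hxY) := by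
          rw [hs, map_sum]
          rw [Finset.sum_eq_single (⟨x, hxY⟩ : {z // z ∈ Y})]
          · simp
          · intro b _ hbx
            have hbx' : b.1 ≠ x := fun h => hbx (Subtype.ext h)
            simp [(hq b.1 b.2).2.1 x hxY (Ne.symm hbx')]
          · intro h; exact absurd (Finset.mem_attach _ _) h
        have hqx := (hq x hxY).2.2
        have hσx := hYσ x hxY
        simp only [eval_sub, eval_mul, this]
        field_simp
        ring
    · -- nonzero at A
      have : eval A σ = 0 := hXσ A hAX
      simp [this, hpA]
  · -- A ∈ Y
    obtain ⟨hqd, hqz, hqA⟩ := hq A hAY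
    refine ⟨σ * q A hAY, ?_, ?_, ?_⟩
    · calc (σ * q A hAY).totalDegree ≤ σ.totalDegree + (q A hAY).totalDegree :=
          totalDegree_mul _ _
        _ ≤ k + (n - k) := add_le_add (le_of_eq hdeg) hqd
        _ = n := Nat.add_sub_cancel' hkn
    · intro x hx hxA
      rcases Finset.mem_union.mp hx with hxX | hxY
      · simp [hXσ x hxX]
      · simp [hqz x hxY hxA]
    · simp only [eval_mul]
      exact mul_ne_zero (hYσ A hAY) hqA
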